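/- Every finite graph with no isolated vertices has a vertex partition into two dominating sets; in particular, the vertex set of any finite simple graph with minimum degree at least 1 can be partitioned into sets D and its complement, both of which are dominating sets. -/

import Mathlib

/-- `D` is a dominating set of `G`: every vertex outside `D` has a neighbor in `D`. -/
def Dominates {V : Type*} (G : SimpleGraph V) (D : Set V) : Prop :=
  ∀ v, v ∉ D → ∃ u ∈ D, G.Adj v u

/-- `T` is a total dominating set of `G`: every vertex has a neighbor in `T`. -/
def TotallyDominates {V : Type*} (G : SimpleGraph V) (T : Set V) : Prop :=
  ∀ v, ∃ u ∈ T, G.Adj v u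

/-- `(D, T)` is a DT-pair in `G`. -/
def DTPair {V : Type*} (G : SimpleGraph V) (D T : Set V) : Prop :=
  Disjoint D T ∧ Dominates G D ∧ TotallyDominates G T

/-- `G` has a DT-pair. -/
def HasDTPair {V : Type*} (G : SimpleGraph V) : Prop :=
  ∃ D T : Set V, DTPair G D T

/-- Ore: the vertex set of any finite simple graph with no isolated vertices can be
partitioned into a set `D` and its complement, both of which are dominating sets. -/
theorem ore_partition_into_two_dominating_sets {V : Type*} [Fintype V]
    (G : SimpleGraph V) (h : ∀ v : V, ∃ u, G.Adj v u) :
    ∃ D : Set V, Dominates G D ∧ Dominates G Dᶜ := by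
    classical
  -- take a maximal independent set D
  have := zorn_subset {S : Set V | ∀ u ∈ S, ∀ v ∈ S, ¬ G.Adj u v} ?_
  · obtain ⟨D, hD⟩ := this
    have hind : ∀ u ∈ D, ∀ v ∈ D, ¬ G.Adj u v := hD.1
    refine ⟨D, ?_, ?_⟩
    · intro v hv
      by_contra hc
      push_neg at hc
      have : insert v D ∈ {S : Set V | ∀ u ∈ S, ∀ v ∈ S, ¬ G.Adj u v} := by
        intro a ha b hb
        rcases ha with rfl | ha <;> rcases hb with rfl | hb
        · exact G.loopless.irrefl _
        · intro hadj; exact hc b hb hadj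
        · intro hadj; exact hc a ha hadj.symm
        · exact hind a ha b hb
      have := hD.2 this (Set.subset_insert v D)
      exact hv (this (Set.mem_insert v D))
    · intro v hv
      simp only [Set.notMem_compl_iff] at hv
      obtain ⟨u, hu⟩ := h v
      exact ⟨u, fun huD => hind v hv u huD hu, hu⟩
  · intro c hc hchain
    refine ⟨⋃₀ c, ?_, fun s hs => Set.subset_sUnion_of_mem hs⟩
    rintro u ⟨s, hs, hus⟩ v ⟨t, ht, hvt⟩
    rcases hchain.total hs ht with hst | hts
    · exact hc ht u (hst hus) v hvt
    · exact hc hs u hus v (hts hvt)
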